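/- If a and b are vector symmetry-adapted polynomials on the disk with the same mode m, and on the positive x-axis a(r,0) = f(r)(1, εi)ᵀ and b(r,0) = g(r)(1, εi)ᵀ for some scalar functions f, g and a common sign ε ∈ {+1,−1}, then ∬_Ω a(x)* Σ(x) b(x) w(r) dx = 0 for any radial weight w, where Σ(x,y) = [[x²−y², 2xy],[2xy, y²−x²]]. -/

import Mathlib

open Matrix MeasureTheory

noncomputable def rot (φ : ℝ) : Matrix (Fin 2) (Fin 2) ℝ :=
  !![Real.cos φ, -Real.sin φ; Real.sin φ, Real.cos φ]

noncomputable def rotC (φ : ℝ) : Matrix (Fin 2) (Fin 2) ℂ := (rot φ).map Complex.ofReal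

def Sig (x : Fin 2 → ℝ) : Matrix (Fin 2) (Fin 2) ℝ :=
  !![x 0 ^ 2 - x 1 ^ 2, 2 * x 0 * x 1; 2 * x 0 * x 1, x 1 ^ 2 - x 0 ^ 2]

noncomputable def SigC (x : Fin 2 → ℝ) : Matrix (Fin 2) (Fin 2) ℂ := (Sig x).map Complex.ofReal

noncomputable def evalR (p : MvPolynomial (Fin 2) ℂ) (x : Fin 2 → ℝ) : ℂ :=
  MvPolynomial.eval (fun i => (x i : ℂ)) p

/-- Two vector symmetry-adapted polynomials with the same mode `m`, whose values on the
positive `x`-axis are proportional to `(1, εi)ᵀ` for a common sign `ε`, are orthogonal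
with respect to the matrix `Σ` and any radial weight. -/
theorem Sig_orthogonality (m : ℤ) (ε : ℝ) (hε : ε = 1 ∨ ε = -1)
    (a b : Fin 2 → MvPolynomial (Fin 2) ℂ) (f g : ℝ → ℂ) (w : ℝ → ℝ)
    (ha : ∀ (φ : ℝ) (x : Fin 2 → ℝ),
      (fun i => evalR (a i) (rot φ *ᵥ x)) =
        Complex.exp (Complex.I * m * φ) • (rotC φ *ᵥ fun i => evalR (a i) x))
    (hb : ∀ (φ : ℝ) (x : Fin 2 → ℝ),
      (fun i => evalR (b i) (rot φ *ᵥ x)) =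
        Complex.exp (Complex.I * m * φ) • (rotC φ *ᵥ fun i => evalR (b i) x))
    (haxis : ∀ r : ℝ, (fun i => evalR (a i) ![r, 0]) = ![f r, (ε : ℂ) * Complex.I * f r])
    (hbaxis : ∀ r : ℝ, (fun i => evalR (b i) ![r, 0]) = ![g r, (ε : ℂ) * Complex.I * g r]) :
    ∫ x in {x : Fin 2 → ℝ | x 0 ^ 2 + x 1 ^ 2 ≤ 1},
      (star (fun i => evalR (a i) x) ⬝ᵥ (SigC x *ᵥ fun i => evalR (b i) x)) *
        (w (Real.sqrt (x 0 ^ 2 + x 1 ^ 2)) : ℂ) = 0 := by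
  have key : ∀ x : Fin 2 → ℝ,
      (star (fun i => evalR (a i) x) ⬝ᵥ (SigC x *ᵥ fun i => evalR (b i) x)) = 0 := by
    intro x
    obtain ⟨r, φ, hx0, hx1⟩ : ∃ r φ : ℝ, x 0 = r * Real.cos φ ∧ x 1 = r * Real.sin φ := by
      by_cases h : x 0 = 0 ∧ x 1 = 0
      · exact ⟨0, 0, by simp [h.1], by simp [h.2]⟩
      · set z : ℂ := ⟨x 0, x 1⟩ with hz
        have hz0 : z ≠ 0 := by
          simp only [ne_eq, Complex.ext_iff, hz, Complex.zero_re, Complex.zero_im]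
          tauto
        have habs : ‖z‖ ≠ 0 := by simpa using hz0
        refine ⟨‖z‖, z.arg, ?_, ?_⟩
        · rw [Complex.cos_arg hz0]; field_simp [hz]; rfl
        · rw [Complex.sin_arg]; field_simp [hz]; rfl
    have hx : x = rot φ *ᵥ ![r, 0] := by
      funext i
      fin_cases i <;>
        simp [rot, mulVec, dotProduct, Fin.sum_univ_two, hx0, hx1, mul_comm]
    have HA := ha φ ![r, 0]
    have HB := hb φ ![r, 0]
    rw [haxis r] at HA
    rw [hbaxis r] at HB
    rw [← hx] at HA HB
    rw [HA, HB, star_smul, smul_dotProduct, Matrix.mulVec_smul, dotProduct_smul,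
      smul_eq_mul, smul_eq_mul]
    have h0 : star (rotC φ *ᵥ ![f r, (ε : ℂ) * Complex.I * f r]) ⬝ᵥ
        (SigC x *ᵥ (rotC φ *ᵥ ![g r, (ε : ℂ) * Complex.I * g r])) = 0 := by
      have hε2 : (ε : ℂ) ^ 2 = 1 := by rcases hε with h | h <;> simp [h]
      simp only [SigC, Sig, rotC, rot, hx0, hx1, Matrix.map_apply, mulVec, dotProduct,
        Fin.sum_univ_two, Matrix.cons_val', Matrix.cons_val_zero, Matrix.cons_val_one,
        Matrix.head_cons, Matrix.head_fin_const, Matrix.empty_val', Matrix.cons_val_fin_one,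
        Matrix.of_apply, Pi.star_apply, star_mul', star_add, Complex.conj_ofReal, map_add,
        _root_.map_mul, map_neg, map_sub, map_pow, Complex.conj_I, Complex.ofReal_neg, Complex.star_def]
      push_cast
      linear_combination (-(r : ℂ) ^ 2 * (starRingEnd ℂ) (f r) * g r *
        (Complex.cos φ ^ 2 + Complex.sin φ ^ 2) ^ 2) * hε2 +
        ((r : ℂ) ^ 2 * (starRingEnd ℂ) (f r) * g r * (ε : ℂ) ^ 2 *
          (Complex.cos φ ^ 2 + Complex.sin φ ^ 2) ^ 2) * Complex.I_sq
    rw [h0, mul_zero, mul_zero]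
  simp only [key, zero_mul, integral_zero]
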